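/- arXiv:2308.06604 — 3 statements merged into one kernel-verified Lean document; each statement's English description precedes it below -/
import Mathlib

section
/- Define g(p) = (1/4) ∫₀^(2^(1/p)) (2 - u^p)^(1/p) du for p ∈ (0,1]. Then g(p) tends to +∞ as p → 0⁺. -/
open Real Filter

/-- `g(p) = (1/4) ∫₀^(2^(1/p)) (2 - u^p)^(1/p) du` for `p ∈ (0,1]`. -/
noncomputable def gInt (p : ℝ) : ℝ :=
  (1/4) * ∫ u in (0:ℝ)..((2:ℝ) ^ (1 / p)), (2 - u ^ p) ^ (1 / p)

lemma key_ineq (x : ℝ) (hx : |x| ≤ 1/4) :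
    Real.exp (-(8*x^2)) ≤ Real.exp x * (2 - Real.exp x) := by
  have h1 : |Real.exp x - 1| ≤ 2*|x| := Real.abs_exp_sub_one_le (hx.trans (by norm_num))
  have h3 : (Real.exp x - 1)^2 ≤ 4*x^2 := by
    have := sq_le_sq' (neg_le_of_abs_le h1) (le_of_abs_le h1)
    calc (Real.exp x - 1)^2 ≤ (2*|x|)^2 := this
    _ = 4*x^2 := by rw [mul_pow, sq_abs]; ring
  have hs' : 4*x^2 ≤ 1/4 := by
    have : x^2 ≤ (1/4)^2 := sq_le_sq' (neg_le_of_abs_le hx) (le_of_abs_le hx)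
    nlinarith
  have h5 : 8*x^2 + 1 ≤ Real.exp (8*x^2) := Real.add_one_le_exp _
  have h6 : Real.exp (-(8*x^2)) * Real.exp (8*x^2) = 1 := by
    rw [← Real.exp_add]; simp
  have hpos : 0 < Real.exp (-(8*x^2)) := Real.exp_pos _
  have h4 : Real.exp (-(8*x^2)) ≤ 1 - 4*x^2 := by
    nlinarith [mul_le_mul_of_nonneg_left h5 hpos.le, sq_nonneg x]
  nlinarith

lemma sqrt_le_quarter {p : ℝ} (hp16 : p ≤ 1/16) : Real.sqrt p ≤ 1/4 := by
  have : Real.sqrt p ≤ Real.sqrt (1/16) := Real.sqrt_le_sqrt hp16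
  rwa [show (1/16:ℝ) = (1/4)^2 by norm_num, Real.sqrt_sq (by norm_num)] at this

lemma pointwise_bound_s3 {p : ℝ} (hp : 0 < p) (hp16 : p ≤ 1/16) {u : ℝ}
    (hu1 : Real.exp (-(1/Real.sqrt p)) ≤ u) (hu2 : u ≤ Real.exp (1/Real.sqrt p)) :
    Real.exp (-8) / u ≤ (2 - u ^ p) ^ (1/p) := by
  have hu0 : 0 < u := lt_of_lt_of_le (Real.exp_pos _) hu1
  have hsp : 0 < Real.sqrt p := Real.sqrt_pos.mpr hp
  set x := p * Real.log u with hxdef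
  have hlogu_le : Real.log u ≤ 1/Real.sqrt p := by
    calc Real.log u ≤ Real.log (Real.exp (1/Real.sqrt p)) := Real.log_le_log hu0 hu2
    _ = 1/Real.sqrt p := Real.log_exp _
  have hlogu_ge : -(1/Real.sqrt p) ≤ Real.log u := by
    calc -(1/Real.sqrt p) = Real.log (Real.exp (-(1/Real.sqrt p))) := (Real.log_exp _).symm
    _ ≤ Real.log u := Real.log_le_log (Real.exp_pos _) hu1
  have habs : |x| ≤ Real.sqrt p := by
    rw [hxdef, abs_mul, abs_of_pos hp]
    have h : |Real.log u| ≤ 1/Real.sqrt p := abs_le.mpr ⟨hlogu_ge, hlogu_le⟩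
    calc p * |Real.log u| ≤ p * (1/Real.sqrt p) := mul_le_mul_of_nonneg_left h hp.le
    _ = Real.sqrt p := by
      rw [mul_one_div, div_eq_iff hsp.ne']
      exact (Real.mul_self_sqrt hp.le).symm
  have habs' : |x| ≤ 1/4 := habs.trans (sqrt_le_quarter hp16)
  have hx2 : x^2 ≤ p := by
    have := sq_le_sq' (neg_le_of_abs_le habs) (le_of_abs_le habs)
    rwa [Real.sq_sqrt hp.le] at this
  have hup : u ^ p = Real.exp x := by
    rw [Real.rpow_def_of_pos hu0, hxdef, mul_comm]
  have hkey : Real.exp (-(8*p)) ≤ Real.exp x * (2 - Real.exp x) := by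
    refine le_trans ?_ (key_ineq x habs')
    exact Real.exp_le_exp.mpr (by nlinarith)
  have hA : 0 < Real.exp (-8) / u := by positivity
  have hmain : (Real.exp (-8) / u) ^ p ≤ 2 - u ^ p := by
    rw [hup, Real.div_rpow (Real.exp_pos _).le hu0.le]
    rw [← Real.exp_log hu0, ← Real.exp_mul, ← Real.exp_mul]
    rw [div_le_iff₀ (Real.exp_pos _)]
    have hxe : Real.exp (Real.log u * p) = Real.exp x := by rw [hxdef, mul_comm]
    rw [hxe]
    calc Real.exp (-8 * p) = Real.exp (-(8*p)) := by ring_nf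
    _ ≤ Real.exp x * (2 - Real.exp x) := hkey
    _ = (2 - Real.exp x) * Real.exp x := by ring
  calc Real.exp (-8) / u = ((Real.exp (-8) / u) ^ p) ^ (1/p) := by
        rw [← Real.rpow_mul hA.le, mul_one_div, div_self hp.ne', Real.rpow_one]
  _ ≤ (2 - u ^ p) ^ (1/p) := Real.rpow_le_rpow (by positivity) hmain (by positivity)

lemma gInt_lower {p : ℝ} (hp : 0 < p) (hp16 : p ≤ 1/16) :
    Real.exp (-8) / (2 * Real.sqrt p) ≤ gInt p := by
  have hsp : 0 < Real.sqrt p := Real.sqrt_pos.mpr hp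
  set a := Real.exp (-(1/Real.sqrt p)) with ha
  set b := Real.exp (1/Real.sqrt p) with hb
  set T := (2:ℝ) ^ (1/p) with hT
  have ha0 : 0 < a := Real.exp_pos _
  have hab : a ≤ b := Real.exp_le_exp.mpr (neg_le_self (by positivity))
  have hbT : b ≤ T := by
    rw [hb, hT, Real.rpow_def_of_pos (by norm_num : (0:ℝ) < 2)]
    apply Real.exp_le_exp.mpr
    rw [mul_one_div, div_le_div_iff₀ hsp hp]
    have hl2 := Real.log_two_gt_d9
    nlinarith [Real.sq_sqrt hp.le, sqrt_le_quarter hp16]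
  have ha0' : 0 ≤ a := ha0.le
  -- continuity / integrability
  have hcont : Continuous fun u : ℝ => (2 - u ^ p) ^ (1/p) := by
    have h1 : Continuous fun u : ℝ => u ^ p :=
      continuous_iff_continuousAt.mpr fun u => Real.continuousAt_rpow_const u p (Or.inr hp.le)
    have h2 : Continuous fun u : ℝ => 2 - u ^ p := continuous_const.sub h1
    exact continuous_iff_continuousAt.mpr fun u =>
      (Real.continuousAt_rpow_const _ (1/p) (Or.inr (by positivity))).comp h2.continuousAt
  have hint : ∀ c d : ℝ, IntervalIntegrable (fun u => (2 - u ^ p) ^ (1/p)) MeasureTheory.volume c d :=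
    fun c d => hcont.intervalIntegrable c d
  have hintdiv : IntervalIntegrable (fun u => Real.exp (-8) / u) MeasureTheory.volume a b := by
    apply ContinuousOn.intervalIntegrable
    apply ContinuousOn.div continuousOn_const continuousOn_id
    intro x hx
    have : a ≤ x := by
      rcases hx with ⟨h1, _⟩
      simpa [min_eq_left hab] using h1
    exact ne_of_gt (lt_of_lt_of_le ha0 this)
  -- pointwise bound on [a,b]
  have hpw : ∀ u ∈ Set.Icc a b, Real.exp (-8) / u ≤ (2 - u ^ p) ^ (1/p) :=
    fun u hu => pointwise_bound_s3 hp hp16 hu.1 hu.2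
  -- nonneg on Ioc 0 T
  have hTp : T ^ p = 2 := by
    rw [hT, ← Real.rpow_mul (by norm_num : (0:ℝ) ≤ 2), one_div_mul_cancel hp.ne', Real.rpow_one]
  have hnn : ∀ u ∈ Set.Ioc (0:ℝ) T, 0 ≤ (2 - u ^ p) ^ (1/p) := by
    intro u hu
    have h1 : u ^ p ≤ T ^ p := Real.rpow_le_rpow hu.1.le hu.2 hp.le
    have h2 : 0 ≤ 2 - u ^ p := by rw [hTp] at h1; linarith
    exact Real.rpow_nonneg h2 _
  -- chain of inequalities
  have I1 : (∫ u in a..b, Real.exp (-8) / u) ≤ ∫ u in a..b, (2 - u ^ p) ^ (1/p) :=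
    intervalIntegral.integral_mono_on hab hintdiv (hint a b) hpw
  have I2 : (∫ u in a..b, (2 - u ^ p) ^ (1/p)) ≤ ∫ u in (0:ℝ)..T, (2 - u ^ p) ^ (1/p) := by
    apply intervalIntegral.integral_mono_interval ha0' hab hbT
    · filter_upwards [MeasureTheory.ae_restrict_mem measurableSet_Ioc] with u hu
      exact hnn u hu
    · exact hint 0 T
  have I3 : (∫ u in a..b, Real.exp (-8) / u) = Real.exp (-8) * (2 / Real.sqrt p) := by
    have h1 : (∫ u in a..b, Real.exp (-8) / u) = Real.exp (-8) * ∫ u in a..b, 1 / u := by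
      rw [← intervalIntegral.integral_const_mul]
      congr 1; funext u; rw [mul_one_div]
    rw [h1, integral_one_div]
    · rw [hb, ha, ← Real.exp_sub, Real.log_exp]
      congr 1
      field_simp
      norm_num
    · intro h
      rcases h with ⟨h1, _⟩
      rw [min_eq_left hab] at h1
      exact absurd h1 (not_le.mpr ha0)
  have : Real.exp (-8) * (2 / Real.sqrt p) ≤ ∫ u in (0:ℝ)..T, (2 - u ^ p) ^ (1/p) := by
    rw [← I3]; exact le_trans I1 I2
  rw [gInt]
  rw [show (2:ℝ) ^ (1/p) = T from hT.symm]
  calc Real.exp (-8) / (2 * Real.sqrt p)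
      = (1/4) * (Real.exp (-8) * (2 / Real.sqrt p)) := by
        field_simp; ring
  _ ≤ (1/4) * ∫ u in (0:ℝ)..T, (2 - u ^ p) ^ (1/p) := by linarith

/-- `g(p) → +∞` as `p → 0⁺`. -/
theorem gInt_tendsto_atTop :
    Tendsto gInt (nhdsWithin 0 (Set.Ioi 0)) atTop := by
  have hmono : ∀ᶠ p in nhdsWithin (0:ℝ) (Set.Ioi 0),
      Real.exp (-8) / (2 * Real.sqrt p) ≤ gInt p := by
    filter_upwards [Ioc_mem_nhdsGT_of_mem (by constructor <;> norm_num :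
      (0:ℝ) ∈ Set.Ico (0:ℝ) (1/16))] with p hp
    exact gInt_lower hp.1 hp.2
  have h1 : Tendsto (fun p : ℝ => Real.sqrt p) (nhdsWithin 0 (Set.Ioi 0))
      (nhdsWithin 0 (Set.Ioi 0)) := by
    rw [tendsto_nhdsWithin_iff]
    constructor
    · simpa using (Real.continuous_sqrt.tendsto 0).mono_left nhdsWithin_le_nhds
    · filter_upwards [self_mem_nhdsWithin] with p hp
      exact Real.sqrt_pos.mpr hp
  have h2 : Tendsto (fun p : ℝ => (Real.sqrt p)⁻¹) (nhdsWithin 0 (Set.Ioi 0)) atTop :=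
    h1.inv_tendsto_nhdsGT_zero
  have h3 : Tendsto (fun p : ℝ => (Real.exp (-8) / 2) * (Real.sqrt p)⁻¹)
      (nhdsWithin 0 (Set.Ioi 0)) atTop :=
    h2.const_mul_atTop (by positivity)
  have heq : (fun p : ℝ => (Real.exp (-8) / 2) * (Real.sqrt p)⁻¹)
      = fun p : ℝ => Real.exp (-8) / (2 * Real.sqrt p) := by
    funext p; rw [div_eq_mul_inv, div_eq_mul_inv (rexp (-8)), mul_inv]; ring
  rw [heq] at h3
  exact tendsto_atTop_mono' _ hmono h3
end

section
/- For every u ≥ 1 and every p ∈ (0,1] with u^p ≤ 2, one has (2 - u^p)^(1/p) ≤ 1/u. -/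
open Real

/-- For every `u ≥ 1` and every `p ∈ (0,1]` with `u^p ≤ 2`, one has `(2 - u^p)^(1/p) ≤ 1/u`. -/
theorem pointwise_bound (u p : ℝ) (hu : 1 ≤ u) (hp : p ∈ Set.Ioc (0:ℝ) 1)
    (hup : u ^ p ≤ 2) :
    (2 - u ^ p) ^ (1 / p) ≤ 1 / u := by
  obtain ⟨hp0, hp1⟩ := hp
  have hu0 : (0:ℝ) < u := lt_of_lt_of_le one_pos hu
  have hx1 : 1 ≤ u ^ p := Real.one_le_rpow hu hp0.le
  have hx0 : 0 < u ^ p := lt_of_lt_of_le one_pos hx1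
  have key : 2 - u ^ p ≤ (1 / u) ^ p := by
    rw [one_div, Real.inv_rpow hu0.le]
    nlinarith [sq_nonneg (u ^ p - 1), mul_inv_cancel₀ hx0.ne', sq_nonneg (u ^ p - 1) , mul_pos hx0 hx0]
  calc (2 - u ^ p) ^ (1 / p) ≤ ((1 / u) ^ p) ^ (1 / p) := by
        apply Real.rpow_le_rpow (by linarith) key (by positivity)
    _ = 1 / u := by
        rw [← Real.rpow_mul (by positivity), mul_one_div, div_self hp0.ne', Real.rpow_one]
end

section
/- For p ∈ (0,1] and integer k ≥ 1, the area of the truncated region X_k(p) satisfies Area(X_k(p)) ≤ 2^(-2/p)·(1 + log 4 + log k). -/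
open Real Set MeasureTheory

/-- `x_k(p) = (1 + k^(p/(p-1)))^(-1/p) + k·(1 + k^(p/(1-p)))^(-1/p)`. -/
noncomputable def xkFun (k : ℕ) (p : ℝ) : ℝ :=
  (1 + (k : ℝ) ^ (p / (p - 1))) ^ (-(1 / p))
    + (k : ℝ) * (1 + (k : ℝ) ^ (p / (1 - p))) ^ (-(1 / p))

lemma xk_eq {p : ℝ} (hp0 : 0 < p) (hp1 : p < 1) {k : ℕ} (hk : 1 ≤ k) :
    xkFun k p = (k : ℝ) * (1 + (k : ℝ) ^ (p / (1 - p))) ^ (1 - 1/p) := by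
  have hK : (1:ℝ) ≤ (k:ℝ) := by exact_mod_cast hk
  have hK0 : (0:ℝ) < (k:ℝ) := by linarith
  have hp' : p ≠ 0 := hp0.ne'
  have h1p : (1:ℝ) - p ≠ 0 := by linarith
  set t : ℝ := (k : ℝ) ^ (p / (1 - p)) with ht_def
  have ht0 : 0 < t := Real.rpow_pos_of_pos hK0 _
  have h1t : 0 < 1 + t := by linarith
  have e1 : (k : ℝ) ^ (p / (p - 1)) = t⁻¹ := by
    rw [show p / (p - 1) = -(p / (1 - p)) by rw [show p - 1 = -(1-p) by ring, div_neg],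
      Real.rpow_neg hK0.le]
  have e2 : (1 : ℝ) + t⁻¹ = (1 + t) / t := by field_simp; ring
  have e4 : t ^ ((1:ℝ)/p) = (k:ℝ) * t := by
    have hkt : (k:ℝ) * t = (k:ℝ) ^ ((1:ℝ) + p/(1-p)) := by
      rw [Real.rpow_add hK0, Real.rpow_one]
    rw [hkt, ht_def, ← Real.rpow_mul hK0.le]
    congr 1
    field_simp
    ring
  have e3 : ((1 + t) / t) ^ (-(1/p) : ℝ) = (1+t) ^ (-(1/p):ℝ) * ((k:ℝ) * t) := by
    rw [Real.div_rpow h1t.le ht0.le, Real.rpow_neg ht0.le, div_eq_mul_inv, inv_inv,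
      show (1:ℝ)/p = ((1:ℝ)/p) from rfl, e4]
  rw [xkFun, e1, e2, e3]
  have e5 : (1+t) * (1+t) ^ (-(1/p):ℝ) = (1+t) ^ ((1:ℝ) - 1/p) := by
    rw [show (1:ℝ) - 1/p = 1 + -(1/p) by ring, Real.rpow_add h1t, Real.rpow_one]
  rw [← e5]
  ring

lemma xk_le {p : ℝ} (hp0 : 0 < p) (hp1 : p < 1) {k : ℕ} (hk : 1 ≤ k) :
    xkFun k p ≤ 2 * Real.sqrt k * (2:ℝ) ^ (-(1/p)) := by
  have hK : (1:ℝ) ≤ (k:ℝ) := by exact_mod_cast hk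
  have hK0 : (0:ℝ) < (k:ℝ) := by linarith
  have hp' : p ≠ 0 := hp0.ne'
  have h1p : (1:ℝ) - p ≠ 0 := by linarith
  set q : ℝ := (1-p)/p with hq_def
  have hq0 : 0 < q := div_pos (by linarith) hp0
  set t : ℝ := (k : ℝ) ^ (p / (1 - p)) with ht_def
  have ht0 : 0 < t := Real.rpow_pos_of_pos hK0 _
  have h1t : 0 < 1 + t := by linarith
  have hamgm : Real.sqrt t ≤ (1+t)/2 := by
    nlinarith [sq_nonneg (Real.sqrt t - 1), Real.sq_sqrt ht0.le, Real.sqrt_nonneg t]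
  have hsk : (Real.sqrt t) ^ q = Real.sqrt (k:ℝ) := by
    rw [Real.sqrt_eq_rpow t, ← Real.rpow_mul ht0.le, ht_def, ← Real.rpow_mul hK0.le,
      Real.sqrt_eq_rpow]
    congr 1
    rw [hq_def]
    field_simp
  have h2 : Real.sqrt (k:ℝ) ≤ ((1+t)/2) ^ q := by
    rw [← hsk]
    exact Real.rpow_le_rpow (Real.sqrt_nonneg t) hamgm hq0.le
  have hdiv : ((1+t)/2 : ℝ) ^ q = (1+t)^q / 2^q :=
    Real.div_rpow h1t.le (by norm_num : (0:ℝ) ≤ 2) q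
  have h2q : (0:ℝ) < (2:ℝ)^q := Real.rpow_pos_of_pos (by norm_num) _
  have h1tq : (0:ℝ) < (1+t)^q := Real.rpow_pos_of_pos h1t _
  have hsK0 : 0 < Real.sqrt (k:ℝ) := Real.sqrt_pos.mpr hK0
  have hKsq : Real.sqrt (k:ℝ) * Real.sqrt (k:ℝ) = (k:ℝ) := Real.mul_self_sqrt hK0.le
  -- key : k * 2^q ≤ √k * (1+t)^q
  have hkey : (k:ℝ) * 2^q ≤ Real.sqrt (k:ℝ) * (1+t)^q := by
    have h3 : Real.sqrt (k:ℝ) * 2^q ≤ (1+t)^q := by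
      rw [hdiv] at h2
      calc Real.sqrt (k:ℝ) * 2^q ≤ ((1+t)^q / 2^q) * 2^q :=
            mul_le_mul_of_nonneg_right h2 h2q.le
        _ = (1+t)^q := by field_simp
    calc (k:ℝ) * 2^q = Real.sqrt (k:ℝ) * (Real.sqrt (k:ℝ) * 2^q) := by
          rw [← mul_assoc, hKsq]
      _ ≤ Real.sqrt (k:ℝ) * (1+t)^q := mul_le_mul_of_nonneg_left h3 hsK0.le
  -- rewrite goal
  rw [xk_eq hp0 hp1 hk, ← ht_def]
  have e6 : ((1:ℝ) - 1/p) = -q := by rw [hq_def]; field_simp; ring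
  have e7 : 2 * Real.sqrt (k:ℝ) * (2:ℝ)^(-(1/p)) = Real.sqrt (k:ℝ) * (2:ℝ)^(-q) := by
    rw [show (-q : ℝ) = 1 + -(1/p) by rw [← e6]; ring, Real.rpow_add (by norm_num : (0:ℝ)<2),
      Real.rpow_one]
    ring
  rw [e6, e7, Real.rpow_neg h1t.le, Real.rpow_neg (by norm_num : (0:ℝ) ≤ 2)]
  rw [← div_eq_mul_inv, ← div_eq_mul_inv, div_le_div_iff₀ h1tq h2q]
  linarith [hkey]

/-- For `p ∈ (0,1]` and integer `k ≥ 1`, the area of the truncated region `X_k(p)`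
satisfies `Area(X_k(p)) ≤ 2^(-2/p)·(1 + log 4 + log k)`. -/
theorem area_truncated_region_le (p : ℝ) (hp : p ∈ Set.Ioc (0:ℝ) 1) (k : ℕ) (hk : 1 ≤ k) :
    (volume {q : ℝ × ℝ | 0 ≤ q.1 ∧ 0 ≤ q.2 ∧ q.1 ^ p + q.2 ^ p ≤ 1 ∧
        max q.1 q.2 ≤ xkFun k p}).toReal
      ≤ (2:ℝ) ^ (-(2 / p)) * (1 + Real.log 4 + Real.log k) := by
  obtain ⟨hp0, hp1⟩ := hp
  have hp' : p ≠ 0 := hp0.ne'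
  have hK : (1:ℝ) ≤ (k:ℝ) := by exact_mod_cast hk
  have hK0 : (0:ℝ) < (k:ℝ) := by linarith
  set c : ℝ := (2:ℝ) ^ (-(2/p)) with hc_def
  have hc0 : 0 < c := Real.rpow_pos_of_pos (by norm_num) _
  set M : ℝ := min (xkFun k p) 1 with hM_def
  have hxk0 : 0 < xkFun k p := by
    have h1 : (0:ℝ) < (1 + (k:ℝ) ^ (p/(p-1))) ^ (-(1/p)) := by
      apply Real.rpow_pos_of_pos
      have := Real.rpow_nonneg hK0.le (p/(p-1))
      linarith
    have h2 : (0:ℝ) ≤ (k:ℝ) * (1 + (k:ℝ) ^ (p/(1-p))) ^ (-(1/p)) := by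
      apply mul_nonneg hK0.le
      exact (Real.rpow_pos_of_pos (by
        have := Real.rpow_nonneg hK0.le (p/(1-p)); linarith) _).le
    rw [xkFun]; linarith
  have hM0 : 0 < M := lt_min hxk0 one_pos
  have hMle : M ≤ 2 * Real.sqrt k * (2:ℝ)^(-(1/p)) := by
    rcases lt_or_eq_of_le hp1 with h | h
    · exact le_trans (min_le_left _ _) (xk_le hp0 h hk)
    · have h1 : (1:ℝ) ≤ Real.sqrt k := by
        rw [show (1:ℝ) = Real.sqrt 1 by rw [Real.sqrt_one]]
        exact Real.sqrt_le_sqrt hK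
      have h2 : (2:ℝ)^(-(1/p)) = 1/2 := by
        rw [h, show (-(1/(1:ℝ))) = ((-1 : ℤ) : ℝ) by norm_num, Real.rpow_intCast]
        norm_num
      rw [h2]
      calc M ≤ 1 := min_le_right _ _
        _ ≤ 2 * Real.sqrt k * (1/2) := by linarith
  have hsq : ((2:ℝ)^(-(1/p)))^2 = c := by
    rw [hc_def, ← Real.rpow_natCast ((2:ℝ)^(-(1/p))) 2, ← Real.rpow_mul (by norm_num : (0:ℝ) ≤ 2)]
    congr 1
    push_cast
    ring
  have hM2 : M^2 ≤ 4 * k * c := by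
    calc M^2 ≤ (2 * Real.sqrt k * (2:ℝ)^(-(1/p)))^2 := pow_le_pow_left₀ hM0.le hMle 2
      _ = 4 * k * c := by
        rw [mul_pow, mul_pow, hsq, Real.sq_sqrt hK0.le]; ring
  set a : ℝ := min M (c/M) with ha_def
  have ha0 : 0 < a := lt_min hM0 (div_pos hc0 hM0)
  have haM : a ≤ M := min_le_left _ _
  have hMac : M * a ≤ c := by
    have h1 : a ≤ c/M := min_le_right _ _
    calc M * a ≤ M * (c/M) := by nlinarith
      _ = c := by field_simp
  have hM4k : M ≤ 4*k*a := by
    rcases min_cases M (c/M) with ⟨h1, h2⟩ | ⟨h1, h2⟩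
    · rw [ha_def, h1]; nlinarith
    · rw [ha_def, h1, show 4*(k:ℝ)*(c/M) = 4*(k:ℝ)*c/M by ring, le_div_iff₀ hM0]; nlinarith
  set T : Set (ℝ×ℝ) := {q : ℝ × ℝ | q.1 ∈ Icc (0:ℝ) M ∧ q.2 ∈ Icc (0:ℝ) M ∧ q.1*q.2 ≤ c}
    with hT_def
  have hsub : {q : ℝ × ℝ | 0 ≤ q.1 ∧ 0 ≤ q.2 ∧ q.1 ^ p + q.2 ^ p ≤ 1 ∧
      max q.1 q.2 ≤ xkFun k p} ⊆ T := by
    rintro ⟨x, y⟩ ⟨hx, hy, hxy, hmax⟩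
    simp only [max_le_iff] at hmax
    have hxp : 0 ≤ x^p := Real.rpow_nonneg hx p
    have hyp : 0 ≤ y^p := Real.rpow_nonneg hy p
    have hle1 : ∀ z : ℝ, 0 ≤ z → z ^ p ≤ 1 → z ≤ 1 := by
      intro z hz hz1
      by_contra h
      push_neg at h
      have : 1 < z ^ p := (Real.one_lt_rpow_iff_of_pos (by linarith)).mpr
        (Or.inl ⟨h, hp0⟩)
      linarith
    have hx1 : x ≤ 1 := hle1 x hx (by simp at hxy ⊢; linarith)
    have hy1 : y ≤ 1 := hle1 y hy (by simp at hxy ⊢; linarith)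
    have hxM : x ≤ M := le_min hmax.1 hx1
    have hyM : y ≤ M := le_min hmax.2 hy1
    have hcp : c ^ p = 1/4 := by
      rw [hc_def, ← Real.rpow_mul (by norm_num : (0:ℝ) ≤ 2),
        show -(2/p) * p = ((-2 : ℤ) : ℝ) by push_cast; field_simp, Real.rpow_intCast]
      norm_num
    have h5 : (x*y)^p ≤ c^p := by
      rw [Real.mul_rpow hx hy, hcp]
      nlinarith [sq_nonneg (x^p - y^p)]
    have hxyc : x*y ≤ c := (Real.rpow_le_rpow_iff (mul_nonneg hx hy) hc0.le hp0).mp h5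
    exact ⟨⟨hx, hxM⟩, ⟨hy, hyM⟩, hxyc⟩
  have hTm : MeasurableSet T := by
    rw [hT_def]
    apply MeasurableSet.inter
    · exact measurable_fst measurableSet_Icc
    apply MeasurableSet.inter
    · exact measurable_snd measurableSet_Icc
    · exact (measurable_fst.mul measurable_snd) measurableSet_Iic
  -- slice function bound
  set F : ℝ → ENNReal := fun x => (Icc (0:ℝ) a).indicator (fun _ => ENNReal.ofReal M) x
    + (Ioc a M).indicator (fun x => ENNReal.ofReal (c/x)) x with hF_def
  have hslice : ∀ x : ℝ, volume (Prod.mk x ⁻¹' T) ≤ F x := by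
    intro x
    by_cases hx : x ∈ Icc (0:ℝ) a
    · have hss : Prod.mk x ⁻¹' T ⊆ Icc 0 M := by
        rintro y ⟨_, hy, _⟩; exact hy
      calc volume (Prod.mk x ⁻¹' T) ≤ volume (Icc (0:ℝ) M) := measure_mono hss
        _ = ENNReal.ofReal M := by rw [Real.volume_Icc, sub_zero]
        _ ≤ F x := by
            rw [hF_def]
            simp only [indicator_of_mem hx]
            exact self_le_add_right _ _
    · by_cases hx2 : x ∈ Ioc a M
      · have hx0 : 0 < x := ha0.trans hx2.1
        have hss : Prod.mk x ⁻¹' T ⊆ Icc 0 (c/x) := by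
          rintro y ⟨_, hy, hxy⟩
          exact ⟨hy.1, (le_div_iff₀ hx0).mpr (by linarith [mul_comm x y])⟩
        calc volume (Prod.mk x ⁻¹' T) ≤ volume (Icc (0:ℝ) (c/x)) := measure_mono hss
          _ = ENNReal.ofReal (c/x) := by rw [Real.volume_Icc, sub_zero]
          _ ≤ F x := by
              rw [hF_def]
              simp only [indicator_of_notMem hx, indicator_of_mem hx2, zero_add, le_refl]
      · have hxM : x ∉ Icc (0:ℝ) M := by
          intro h
          rcases le_or_gt x a with h1 | h1
          · exact hx ⟨h.1, h1⟩
          · exact hx2 ⟨h1, h.2⟩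
        have hempty : Prod.mk x ⁻¹' T = ∅ := by
          ext y
          simp only [mem_preimage, mem_empty_iff_false, iff_false]
          rintro ⟨h1, _, _⟩
          exact hxM h1
        rw [hempty]
        simp
  -- integrability of c/x on Ioc a M
  have hcont : ContinuousOn (fun x : ℝ => c/x) (Icc a M) := by
    apply ContinuousOn.div continuousOn_const continuousOn_id
    intro x hx
    exact (ha0.trans_le hx.1).ne'
  have hint : IntegrableOn (fun x : ℝ => c/x) (Ioc a M) volume :=
    (hcont.integrableOn_Icc).mono_set Ioc_subset_Icc_self
  have hnn : 0 ≤ᵐ[volume.restrict (Ioc a M)] fun x : ℝ => c/x := by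
    filter_upwards [ae_restrict_mem measurableSet_Ioc] with x hx
    exact div_nonneg hc0.le (ha0.trans hx.1).le
  have hintval : ∫ x in Ioc a M, c/x = c * Real.log (M/a) := by
    rw [← intervalIntegral.integral_of_le haM]
    simp_rw [div_eq_mul_inv]
    rw [intervalIntegral.integral_const_mul, integral_inv_of_pos ha0 hM0, div_eq_mul_inv]
  have hlog0 : 0 ≤ Real.log (M/a) := Real.log_nonneg ((one_le_div ha0).mpr haM)
  -- main volume chain
  have hmain : volume {q : ℝ × ℝ | 0 ≤ q.1 ∧ 0 ≤ q.2 ∧ q.1 ^ p + q.2 ^ p ≤ 1 ∧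
      max q.1 q.2 ≤ xkFun k p} ≤ ENNReal.ofReal (M*a + c * Real.log (M/a)) := by
    calc volume {q : ℝ × ℝ | 0 ≤ q.1 ∧ 0 ≤ q.2 ∧ q.1 ^ p + q.2 ^ p ≤ 1 ∧
        max q.1 q.2 ≤ xkFun k p} ≤ volume T := measure_mono hsub
      _ = ∫⁻ x, volume (Prod.mk x ⁻¹' T) := by
          rw [MeasureTheory.Measure.volume_eq_prod, MeasureTheory.Measure.prod_apply hTm]
      _ ≤ ∫⁻ x, F x := lintegral_mono hslice
      _ = ENNReal.ofReal M * volume (Icc (0:ℝ) a) + ∫⁻ x in Ioc a M, ENNReal.ofReal (c/x) := by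
          rw [hF_def, lintegral_add_left (measurable_const.indicator measurableSet_Icc),
            lintegral_indicator measurableSet_Icc, lintegral_indicator measurableSet_Ioc,
            setLIntegral_const]
      _ = ENNReal.ofReal M * ENNReal.ofReal a + ENNReal.ofReal (c * Real.log (M/a)) := by
          rw [Real.volume_Icc, sub_zero, ← hintval,
            ← ofReal_integral_eq_lintegral_ofReal hint hnn]
      _ = ENNReal.ofReal (M*a + c * Real.log (M/a)) := by
          rw [← ENNReal.ofReal_mul hM0.le, ENNReal.ofReal_add (by positivity)
            (mul_nonneg hc0.le hlog0)]
  -- final real inequality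
  have hfin : M*a + c * Real.log (M/a) ≤ c * (1 + Real.log 4 + Real.log k) := by
    have hlog : Real.log (M/a) ≤ Real.log 4 + Real.log k := by
      have h1 : M/a ≤ 4*k := by
        rw [div_le_iff₀ ha0]; linarith
      calc Real.log (M/a) ≤ Real.log (4*k) := Real.log_le_log (by positivity) h1
        _ = Real.log 4 + Real.log k := Real.log_mul (by norm_num) hK0.ne'
    nlinarith [mul_le_mul_of_nonneg_left hlog hc0.le]
  calc (volume {q : ℝ × ℝ | 0 ≤ q.1 ∧ 0 ≤ q.2 ∧ q.1 ^ p + q.2 ^ p ≤ 1 ∧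
      max q.1 q.2 ≤ xkFun k p}).toReal
      ≤ M*a + c * Real.log (M/a) :=
        ENNReal.toReal_le_of_le_ofReal (by positivity) hmain
    _ ≤ c * (1 + Real.log 4 + Real.log k) := hfin
end
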